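/- The number (π - arccos(3/4))/π is irrational; equivalently, arccos(3/4) is an irrational multiple of π. -/
import Mathlib

private def bseq : ℕ → ℤ
  | 0 => 2
  | 1 => 3
  | (n+2) => 3 * bseq (n+1) - 4 * bseq n

private lemma bseq_odd : ∀ n, Odd (bseq (n+1)) := by
  intro n
  induction n with
  | zero => exact ⟨1, by decide⟩
  | succ m ih =>
    show Odd (3 * bseq (m+1) - 4 * bseq m)
    obtain ⟨k, hk⟩ := ih
    exact ⟨3 * k + 1 - 2 * bseq m, by rw [hk]; ring⟩

private lemma cos_rec (x : ℝ) (n : ℕ) :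
    Real.cos ((n+2) * x) = 2 * Real.cos x * Real.cos ((n+1)*x) - Real.cos (n*x) := by
  have h1 := Real.cos_add ((n+1)*x) x
  have h2 := Real.cos_sub ((n+1)*x) x
  have e1 : (n+1)*x + x = (n+2)*x := by ring
  have e2 : (n+1)*x - x = (n:ℝ)*x := by ring
  rw [e1] at h1
  rw [e2] at h2
  linarith [h1, h2]

private lemma bseq_eq (θ : ℝ) (hθ : Real.cos θ = 3/4) :
    ∀ n, (bseq n : ℝ) = 2^n * (2 * Real.cos (n * θ)) := by
  have key : ∀ n, (bseq n : ℝ) = 2^n * (2 * Real.cos (n * θ)) ∧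
      (bseq (n+1) : ℝ) = 2^(n+1) * (2 * Real.cos ((n+1) * θ)) := by
    intro n
    induction n with
    | zero =>
      constructor
      · simp [bseq]
      · have : (bseq 1 : ℝ) = 3 := by norm_num [bseq]
        rw [this]
        push_cast
        rw [show ((0:ℝ)+1) * θ = θ by ring, hθ]
        norm_num
    | succ m ih =>
      constructor
      · have := ih.2
        push_cast at this ⊢
        exact this
      · show ((3 * bseq (m+1) - 4 * bseq m : ℤ) : ℝ) = _
        push_cast
        rw [ih.1, ih.2]
        have e : ((m:ℕ)+1+1 : ℝ) * θ = ((m:ℕ)+2 : ℝ) * θ := by ring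
        rw [e, cos_rec θ m, hθ]
        ring
  exact fun n => (key n).1

private lemma arccos_not_rat_mul_pi : ¬ ∃ q : ℚ, Real.arccos (3 / 4) = q * Real.pi := by
  rintro ⟨q, hq⟩
  set θ := Real.arccos (3/4) with hθdef
  have hcos : Real.cos θ = 3/4 := Real.cos_arccos (by norm_num) (by norm_num)
  set n := 2 * q.den with hn
  have hden : (q.den : ℝ) ≠ 0 := Nat.cast_ne_zero.mpr q.den_nz
  have hnum : ((q.den : ℝ)) * (q : ℝ) = (q.num : ℝ) := by
    rw [Rat.cast_def]
    field_simp
  have hcosn : Real.cos (n * θ) = 1 := by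
    have : (n : ℝ) * θ = (q.num : ℝ) * (2 * Real.pi) := by
      rw [hq, hn]
      push_cast
      rw [show (2:ℝ) * q.den * ((q:ℝ) * Real.pi) = ((q.den:ℝ) * q) * (2 * Real.pi) by ring,
        hnum]
    rw [this]
    exact_mod_cast Real.cos_int_mul_two_pi q.num
  have hb := bseq_eq θ hcos n
  rw [hcosn] at hb
  have hbval : bseq n = 2^(n+1) := by
    have : (bseq n : ℝ) = ((2^(n+1) : ℤ) : ℝ) := by rw [hb]; push_cast; ring
    exact_mod_cast this
  have hpos : 1 ≤ q.den := q.den_pos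
  have hodd : Odd (bseq (2 * q.den - 1 + 1)) := bseq_odd (2 * q.den - 1)
  rw [show 2 * q.den - 1 + 1 = n by omega] at hodd
  rw [hbval] at hodd
  have heven : Even ((2:ℤ)^(n+1)) := Int.even_pow.mpr ⟨even_two, Nat.succ_ne_zero n⟩
  exact (Int.not_odd_iff_even.mpr heven) hodd

theorem arccos_three_quarters_irrational :
    Irrational ((Real.pi - Real.arccos (3 / 4)) / Real.pi) ∧
    ¬ ∃ q : ℚ, Real.arccos (3 / 4) = q * Real.pi := by
  refine ⟨?_, arccos_not_rat_mul_pi⟩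
  rintro ⟨r, hr⟩
  apply arccos_not_rat_mul_pi
  refine ⟨1 - r, ?_⟩
  have hπ : Real.pi ≠ 0 := Real.pi_ne_zero
  have : (r : ℝ) * Real.pi = Real.pi - Real.arccos (3/4) := by
    field_simp at hr
    linarith [hr]
  push_cast
  linarith [this]
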